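/- Let Φ ∈ ℝ^{d+1} be an antisymmetric phase list, let P be the real polynomial such that both diagonal entries of U_Φ(x) equal P(x) for all x ∈ [-1,1], and let x ∈ (−1,1) be such that |P(x)| < 1. Then there exists θ ∈ ℝ such that U_Φ(x) = Z(θ)·W(P(x))·Z(−θ); that is, at each such argument the antisymmetric QSP unitary is a twisted oracle encoding the signal P(x). -/

import Mathlib

open Matrix Polynomial

/-- The single-qubit Z-rotation `Z(φ) = diag(e^{iφ}, e^{-iφ})`. -/
noncomputable def Zrot (φ : ℝ) : Matrix (Fin 2) (Fin 2) ℂ :=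
  !![Complex.exp (Complex.I * (φ : ℂ)), 0; 0, Complex.exp (-(Complex.I * (φ : ℂ)))]

/-- The QSP signal oracle `W(x)`, with diagonal entries `x` and off-diagonal
entries `i·√(1-x²)`. -/
noncomputable def Wosc (x : ℝ) : Matrix (Fin 2) (Fin 2) ℂ :=
  !![(x : ℂ), Complex.I * (Real.sqrt (1 - x ^ 2) : ℂ);
     Complex.I * (Real.sqrt (1 - x ^ 2) : ℂ), (x : ℂ)]

/-- The QSP unitary `U_Φ(x) = Z(φ₀)·W(x)·Z(φ₁)·W(x)·Z(φ₂)⋯W(x)·Z(φ_d)`. -/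
noncomputable def qspU {d : ℕ} (Φ : Fin (d + 1) → ℝ) (x : ℝ) :
    Matrix (Fin 2) (Fin 2) ℂ :=
  Zrot (Φ 0) * (List.ofFn fun k : Fin d => Wosc x * Zrot (Φ k.succ)).prod

/-- The nested QSP unitary `(Φ1 ∘ Φ0)(x)`: the QSP circuit of `Φ1` with each
oracle `W(x)` replaced by `U_{Φ0}(x)`. -/
noncomputable def nestedU {n m : ℕ} (Φ1 : Fin (m + 1) → ℝ) (Φ0 : Fin (n + 1) → ℝ)
    (x : ℝ) : Matrix (Fin 2) (Fin 2) ℂ :=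
  Zrot (Φ1 0) * (List.ofFn fun k : Fin m => qspU Φ0 x * Zrot (Φ1 k.succ)).prod

/-- A phase list `Φ = (φ_0, …, φ_d)` is antisymmetric if `φ_k = -φ_{d-k}` for all `k`. -/
def Antisym {d : ℕ} (Φ : Fin (d + 1) → ℝ) : Prop := ∀ k, Φ (Fin.rev k) = -Φ k

/-- A polynomial has parity `m mod 2` if only monomials of degree congruent to `m`
modulo 2 have nonzero coefficients. -/
def HasParity {R : Type*} [Semiring R] (m : ℕ) (P : Polynomial R) : Prop :=
  ∀ k, k % 2 ≠ m % 2 → P.coeff k = 0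

def IsSU2 (M : Matrix (Fin 2) (Fin 2) ℂ) : Prop :=
  ∃ a b : ℂ, M = !![a, b; -(starRingEnd ℂ b), starRingEnd ℂ a] ∧
    a * starRingEnd ℂ a + b * starRingEnd ℂ b = 1

lemma IsSU2.mul {M N : Matrix (Fin 2) (Fin 2) ℂ} (hM : IsSU2 M) (hN : IsSU2 N) :
    IsSU2 (M * N) := by
  obtain ⟨a, b, rfl, ha⟩ := hM
  obtain ⟨c, d, rfl, hc⟩ := hN
  refine ⟨a * c - b * starRingEnd ℂ d, a * d + b * starRingEnd ℂ c, ?_, ?_⟩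
  · ext i j
    fin_cases i <;> fin_cases j <;>
      simp [Matrix.mul_apply, Fin.sum_univ_two, _root_.map_mul, _root_.map_add, _root_.map_sub, _root_.map_neg,
        Complex.conj_conj] <;> ring
  · simp only [map_add, map_sub, _root_.map_mul, map_neg, Complex.conj_conj]
    linear_combination (c * starRingEnd ℂ c + d * starRingEnd ℂ d) * ha + hc

lemma isSU2_one : IsSU2 1 := by
  refine ⟨1, 0, ?_, by simp⟩
  ext i j; fin_cases i <;> fin_cases j <;> simp [Matrix.one_apply]

lemma isSU2_Zrot (φ : ℝ) : IsSU2 (Zrot φ) := by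
  refine ⟨Complex.exp (Complex.I * (φ : ℂ)), 0, ?_, ?_⟩
  · ext i j
    fin_cases i <;> fin_cases j <;>
      simp [Zrot, ← Complex.exp_conj, _root_.map_mul, Complex.conj_I]
  · simp [← Complex.exp_conj, _root_.map_mul, Complex.conj_I, ← Complex.exp_add]

lemma isSU2_Wosc {x : ℝ} (hx : x ∈ Set.Icc (-1 : ℝ) 1) : IsSU2 (Wosc x) := by
  have h1 : (0:ℝ) ≤ 1 - x ^ 2 := by nlinarith [hx.1, hx.2]
  refine ⟨(x : ℂ), Complex.I * (Real.sqrt (1 - x ^ 2) : ℂ), ?_, ?_⟩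
  · ext i j
    fin_cases i <;> fin_cases j <;>
      simp [Wosc, _root_.map_mul, Complex.conj_I, Complex.conj_ofReal]
  · have hs : (Real.sqrt (1 - x ^ 2) : ℝ) ^ 2 = 1 - x ^ 2 := Real.sq_sqrt h1
    simp only [_root_.map_mul, Complex.conj_I, Complex.conj_ofReal]
    have h2 : ((Real.sqrt (1 - x ^ 2) : ℝ) : ℂ) ^ 2 = 1 - (x:ℂ) ^ 2 := by
      rw [← Complex.ofReal_pow, hs]; push_cast; ring
    linear_combination h2 - ((Real.sqrt (1 - x ^ 2) : ℝ) : ℂ) ^ 2 * Complex.I_sq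

lemma isSU2_list_prod (l : List (Matrix (Fin 2) (Fin 2) ℂ))
    (h : ∀ M ∈ l, IsSU2 M) : IsSU2 l.prod := by
  induction l with
  | nil => simpa using isSU2_one
  | cons M l ih =>
    rw [List.prod_cons]
    exact (h M List.mem_cons_self).mul (ih fun N hN => h N (List.mem_cons_of_mem _ hN))

lemma isSU2_qspU {d : ℕ} (Φ : Fin (d + 1) → ℝ) {x : ℝ} (hx : x ∈ Set.Icc (-1 : ℝ) 1) :
    IsSU2 (qspU Φ x) := by
  refine (isSU2_Zrot _).mul (isSU2_list_prod _ ?_)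
  intro M hM
  rw [List.mem_ofFn] at hM
  obtain ⟨k, rfl⟩ := hM
  exact (isSU2_Wosc hx).mul (isSU2_Zrot _)

/-- At any argument `x ∈ (-1,1)` with `|P(x)| < 1`, an
antisymmetric QSP unitary is a twisted oracle encoding the signal `P(x)`:
`U_Φ(x) = Z(θ)·W(P(x))·Z(-θ)` for some `θ`. -/
theorem antisym_qsp_is_twisted_oracle (d : ℕ) (Φ : Fin (d + 1) → ℝ)
    (hΦ : Antisym Φ) (P : Polynomial ℝ)
    (hP : ∀ y ∈ Set.Icc (-1 : ℝ) 1,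
      (qspU Φ y) 0 0 = ((P.eval y : ℝ) : ℂ) ∧
      (qspU Φ y) 1 1 = ((P.eval y : ℝ) : ℂ))
    (x : ℝ) (hx : x ∈ Set.Ioo (-1 : ℝ) 1) (hPx : |P.eval x| < 1) :
    ∃ θ : ℝ, qspU Φ x = Zrot θ * Wosc (P.eval x) * Zrot (-θ) := by
  have hxIcc : x ∈ Set.Icc (-1 : ℝ) 1 := ⟨hx.1.le, hx.2.le⟩
  obtain ⟨a, b, hU, hnorm⟩ := isSU2_qspU Φ hxIcc
  set p : ℝ := P.eval x with hp
  have hp2 : p ^ 2 < 1 := by nlinarith [abs_lt.mp hPx]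
  set s : ℝ := Real.sqrt (1 - p ^ 2) with hsdef
  have hs_pos : 0 < s := Real.sqrt_pos.mpr (by linarith)
  have hs_sq : (s : ℝ) ^ 2 = 1 - p ^ 2 := Real.sq_sqrt (by linarith)
  -- a = p
  have ha : a = (p : ℂ) := by
    have := (hP x hxIcc).1
    rw [hU] at this
    simpa using this
  -- b * conj b = s^2
  have hsC : ((s : ℂ)) ^ 2 = 1 - (p : ℂ) ^ 2 := by
    rw [← Complex.ofReal_pow, hs_sq]; push_cast; ring
  have hb : b * starRingEnd ℂ b = (s : ℂ) ^ 2 := by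
    rw [ha] at hnorm
    rw [hsC]
    have : starRingEnd ℂ ((p : ℂ)) = (p : ℂ) := Complex.conj_ofReal p
    rw [this] at hnorm
    linear_combination hnorm
  have hbabs : ‖b‖ = s := by
    have h1 : Complex.normSq b = s ^ 2 := by
      have := hb
      rw [Complex.mul_conj] at this
      exact_mod_cast this
    rw [← Real.sqrt_sq hs_pos.le, ← h1]
    rfl
  have hb0 : b ≠ 0 := by
    intro h
    rw [h] at hbabs
    simp at hbabs
    exact hs_pos.ne' hbabs.symm
  -- c = b / (I * s), |c| = 1
  set c : ℂ := b / (Complex.I * (s : ℂ)) with hcdef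
  have hIs0 : Complex.I * (s : ℂ) ≠ 0 := by
    simp [Complex.I_ne_zero, Complex.ofReal_ne_zero, hs_pos.ne']
  have hbc : b = Complex.I * (s : ℂ) * c := by
    exact (mul_div_cancel₀ b hIs0).symm
  have hcabs : ‖c‖ = 1 := by
    rw [hcdef, norm_div, hbabs]
    simp [Complex.norm_real, abs_of_pos hs_pos, hs_pos.ne']
  have hcexp : Complex.exp ((Complex.arg c : ℂ) * Complex.I) = c := by
    have := Complex.norm_mul_exp_arg_mul_I c
    rwa [hcabs, Complex.ofReal_one, one_mul] at this
  refine ⟨Complex.arg c / 2, ?_⟩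
  set θ : ℝ := Complex.arg c / 2 with hθ
  have hθ2 : (θ : ℝ) * 2 = Complex.arg c := by rw [hθ]; ring
  have hexp2 : Complex.exp (Complex.I * (θ : ℂ)) * Complex.exp (Complex.I * (θ : ℂ)) = c := by
    rw [← Complex.exp_add, ← hcexp]
    congr 1
    push_cast [← hθ2]
    ring
  have hconj : starRingEnd ℂ c = Complex.exp (-(Complex.I * (θ:ℂ))) * Complex.exp (-(Complex.I * (θ:ℂ))) := by
    rw [← hexp2, _root_.map_mul, ← Complex.exp_conj]
    simp [_root_.map_mul, Complex.conj_I, Complex.conj_ofReal]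
  rw [hU, ha]
  ext i j
  fin_cases i <;> fin_cases j <;>
    simp [Zrot, Wosc, Matrix.mul_apply, Fin.sum_univ_two, hbc, ← hp]
  · -- (0,0) entry : p = e^{Iθ} * p * e^{-Iθ}
    rw [mul_comm (Complex.exp _), mul_assoc, ← Complex.exp_add]
    simp
  · -- (0,1)
    rw [← hsdef, ← hexp2]; ring
  · -- (1,0)
    rw [← hsdef, hconj]; ring
  · rw [mul_comm (Complex.exp _), mul_assoc, ← Complex.exp_add]
    simp
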